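/- Let γ > 0 and g(ω,t) = (4/π) e^{−8γ t sin²(ω)} cos²(ω). Then t^{−1/2} ∫_0^t ∫_0^{π/2} g(ω,s) dω ds converges to 2/√(2πγ) as t → ∞, so the diffusivity D(t) diverges like √t. -/

import Mathlib

open Real Filter MeasureTheory intervalIntegral

lemma intervalIntegrable_inv_sqrt {T t : ℝ} (hT : 0 < T) (hTt : T ≤ t) :
    IntervalIntegrable (fun s => (Real.sqrt s)⁻¹) volume T t := by
  apply ContinuousOn.intervalIntegrable
  intro s hs
  have hs0 : 0 < s := by
    rcases Set.mem_uIcc.mp hs with h | h <;> nlinarith [h.1, h.2]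
  exact ((Real.continuous_sqrt.continuousAt).continuousWithinAt).inv₀
    (Real.sqrt_ne_zero'.mpr hs0)

lemma integral_inv_sqrt {T t : ℝ} (hT : 0 < T) (hTt : T ≤ t) :
    ∫ s in T..t, (Real.sqrt s)⁻¹ = 2 * Real.sqrt t - 2 * Real.sqrt T := by
  have h : ∀ s ∈ Set.uIcc T t, HasDerivAt (fun x => 2 * Real.sqrt x) (Real.sqrt s)⁻¹ s := by
    intro s hs
    have hs0 : 0 < s := by
      rcases Set.mem_uIcc.mp hs with h | h <;> nlinarith [h.1, h.2]
    have : HasDerivAt (fun x => 2 * Real.sqrt x) (2 * (1 / (2 * Real.sqrt s))) s :=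
      (Real.hasDerivAt_sqrt hs0.ne').const_mul 2
    convert this using 1
    have : Real.sqrt s ≠ 0 := Real.sqrt_ne_zero'.mpr hs0
    ring
  rw [intervalIntegral.integral_eq_sub_of_hasDerivAt h (intervalIntegrable_inv_sqrt hT hTt)]

lemma tendsto_sqrt_atTop' : Tendsto Real.sqrt atTop atTop := by
  apply tendsto_atTop_atTop.mpr
  intro b
  refine ⟨(max b 0) ^ 2, fun a ha => ?_⟩
  calc b ≤ max b 0 := le_max_left _ _
    _ = Real.sqrt ((max b 0) ^ 2) := (Real.sqrt_sq (le_max_right _ _)).symm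
    _ ≤ Real.sqrt a := Real.sqrt_le_sqrt ha

lemma cesaro_sqrt {f : ℝ → ℝ} (hf : ∀ a b : ℝ, IntervalIntegrable f volume a b) {c : ℝ}
    (h : Tendsto (fun s => Real.sqrt s * f s) atTop (nhds c)) :
    Tendsto (fun t => (Real.sqrt t)⁻¹ * ∫ s in (0:ℝ)..t, f s) atTop (nhds (2 * c)) := by
  rw [Metric.tendsto_nhds]
  intro ε hε
  have hε' : 0 < ε / 4 := by linarith
  have h1 : ∀ᶠ s in atTop, dist (Real.sqrt s * f s) c < ε / 4 :=
    (Metric.tendsto_nhds.mp h) _ hε'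
  obtain ⟨T, hT⟩ := (h1.and (eventually_ge_atTop (1:ℝ))).exists_forall_of_atTop
  have hT1 : (1:ℝ) ≤ T := (hT T le_rfl).2
  have hT0 : (0:ℝ) < T := lt_of_lt_of_le one_pos hT1
  set K := |∫ s in (0:ℝ)..T, f s| + 2 * |c| * Real.sqrt T with hK
  have hK0 : 0 ≤ K := by positivity
  have hsqrt : Tendsto (fun t : ℝ => (Real.sqrt t)⁻¹) atTop (nhds 0) :=
    tendsto_sqrt_atTop'.inv_tendsto_atTop
  have hKt : Tendsto (fun t : ℝ => K * (Real.sqrt t)⁻¹) atTop (nhds 0) := by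
    simpa using hsqrt.const_mul K
  have hKev : ∀ᶠ t in atTop, |K * (Real.sqrt t)⁻¹| < ε / 4 := by
    have := (Metric.tendsto_nhds.mp hKt) _ hε'
    simpa [Real.dist_eq, abs_mul, abs_inv] using this
  filter_upwards [eventually_ge_atTop (max T 1), hKev] with t ht hKlt
  have htT : T ≤ t := le_trans (le_max_left _ _) ht
  have ht1 : (1:ℝ) ≤ t := le_trans (le_max_right _ _) ht
  have hst : 0 < Real.sqrt t := Real.sqrt_pos.mpr (by linarith)
  have hsT : 0 < Real.sqrt T := Real.sqrt_pos.mpr hT0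
  have hsTt : Real.sqrt T ≤ Real.sqrt t := Real.sqrt_le_sqrt htT
  have hsplit : (∫ s in (0:ℝ)..t, f s) = (∫ s in (0:ℝ)..T, f s) + ∫ s in T..t, f s :=
    (integral_add_adjacent_intervals (hf 0 T) (hf T t)).symm
  set I0 := ∫ s in (0:ℝ)..T, f s with hI0
  set J := ∫ s in T..t, f s with hJ
  have hmid : |J - c * (2 * Real.sqrt t - 2 * Real.sqrt T)| ≤
      ε / 4 * (2 * Real.sqrt t - 2 * Real.sqrt T) := by
    have hconst : c * (2 * Real.sqrt t - 2 * Real.sqrt T)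
        = ∫ s in T..t, c * (Real.sqrt s)⁻¹ := by
      rw [intervalIntegral.integral_const_mul, integral_inv_sqrt hT0 htT]
    rw [hJ, hconst, ← intervalIntegral.integral_sub (hf T t)
      ((intervalIntegrable_inv_sqrt hT0 htT).const_mul c)]
    have habs : |∫ s in T..t, (f s - c * (Real.sqrt s)⁻¹)| ≤
        ∫ s in T..t, |f s - c * (Real.sqrt s)⁻¹| :=
      intervalIntegral.abs_integral_le_integral_abs htT
    refine habs.trans ?_
    have hmono : (∫ s in T..t, |f s - c * (Real.sqrt s)⁻¹|) ≤
        ∫ s in T..t, ε / 4 * (Real.sqrt s)⁻¹ := by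
      apply intervalIntegral.integral_mono_on htT
      · exact ((hf T t).sub ((intervalIntegrable_inv_sqrt hT0 htT).const_mul c)).abs
      · exact (intervalIntegrable_inv_sqrt hT0 htT).const_mul _
      · intro s hs
        have hss : 0 < Real.sqrt s := Real.sqrt_pos.mpr (lt_of_lt_of_le hT0 hs.1)
        have heq : f s - c * (Real.sqrt s)⁻¹ = (Real.sqrt s * f s - c) * (Real.sqrt s)⁻¹ := by
          field_simp
        rw [heq, abs_mul, abs_of_pos (inv_pos.mpr hss)]
        have hdist : |Real.sqrt s * f s - c| ≤ ε / 4 := by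
          have := (hT s hs.1).1
          rw [Real.dist_eq] at this
          linarith
        exact mul_le_mul_of_nonneg_right hdist (inv_pos.mpr hss).le
    refine hmono.trans ?_
    rw [intervalIntegral.integral_const_mul, integral_inv_sqrt hT0 htT]
  have key : (Real.sqrt t)⁻¹ * (∫ s in (0:ℝ)..t, f s) - 2 * c
      = (Real.sqrt t)⁻¹ * I0
        + (Real.sqrt t)⁻¹ * (J - c * (2 * Real.sqrt t - 2 * Real.sqrt T))
        - 2 * c * Real.sqrt T * (Real.sqrt t)⁻¹ := by
    rw [hsplit]
    field_simp
    ring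
  rw [Real.dist_eq, key]
  have e1 : |(Real.sqrt t)⁻¹ * I0
      + (Real.sqrt t)⁻¹ * (J - c * (2 * Real.sqrt t - 2 * Real.sqrt T))
      - 2 * c * Real.sqrt T * (Real.sqrt t)⁻¹|
      ≤ |(Real.sqrt t)⁻¹ * I0|
        + |(Real.sqrt t)⁻¹ * (J - c * (2 * Real.sqrt t - 2 * Real.sqrt T))|
        + |2 * c * Real.sqrt T * (Real.sqrt t)⁻¹| := by
    calc _ ≤ |(Real.sqrt t)⁻¹ * I0
        + (Real.sqrt t)⁻¹ * (J - c * (2 * Real.sqrt t - 2 * Real.sqrt T))|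
        + |2 * c * Real.sqrt T * (Real.sqrt t)⁻¹| := abs_sub _ _
      _ ≤ _ := by gcongr; exact abs_add_le _ _
  have e2 : |(Real.sqrt t)⁻¹ * I0| + |2 * c * Real.sqrt T * (Real.sqrt t)⁻¹|
      = K * (Real.sqrt t)⁻¹ := by
    rw [abs_mul, abs_mul, abs_of_pos (inv_pos.mpr hst)]
    rw [abs_mul, abs_mul]
    simp [abs_of_pos hsT, abs_of_pos hst, hK]
    ring
  have e3 : |(Real.sqrt t)⁻¹ * (J - c * (2 * Real.sqrt t - 2 * Real.sqrt T))| ≤ ε / 2 := by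
    rw [abs_mul, abs_of_pos (inv_pos.mpr hst)]
    have : (Real.sqrt t)⁻¹ * |J - c * (2 * Real.sqrt t - 2 * Real.sqrt T)|
        ≤ (Real.sqrt t)⁻¹ * (ε / 4 * (2 * Real.sqrt t - 2 * Real.sqrt T)) :=
      mul_le_mul_of_nonneg_left hmid (inv_pos.mpr hst).le
    refine this.trans ?_
    rw [inv_mul_le_iff₀ hst]
    nlinarith
  have e4 : K * (Real.sqrt t)⁻¹ < ε / 4 := (le_abs_self _).trans_lt hKlt
  linarith

lemma tendsto_sin_div_nhdsWithin : Tendsto (fun y : ℝ => Real.sin y / y) (nhdsWithin 0 {0}ᶜ) (nhds 1) := by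
  have h := hasDerivAt_iff_tendsto_slope.mp (Real.hasDerivAt_sin 0)
  rw [Real.cos_zero] at h
  refine h.congr (fun y => ?_)
  simp [slope_def_field, div_eq_mul_inv]

lemma gauss_scaling (γ : ℝ) (hγ : 0 < γ) :
    Tendsto (fun t => Real.sqrt t *
        ∫ ω in (0:ℝ)..(π/2), Real.exp (-8*γ*t*Real.sin ω^2) * Real.cos ω^2)
      atTop (nhds (Real.sqrt (π / (8*γ)) / 2)) := by
  set F : ℝ → ℝ → ℝ := fun t u => (Set.Ioc (0:ℝ) (π/2 * Real.sqrt t)).indicator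
    (fun u => Real.exp (-8*γ*t*Real.sin (u / Real.sqrt t)^2) * Real.cos (u / Real.sqrt t)^2) u
    with hF
  have hG : Tendsto (fun t => ∫ u in Set.Ioi (0:ℝ), F t u) atTop
      (nhds (∫ u in Set.Ioi (0:ℝ), Real.exp (-(8*γ) * u^2))) := by
    apply MeasureTheory.tendsto_integral_filter_of_dominated_convergence
      (bound := fun u => Real.exp (-(32*γ/π^2) * u^2))
    · -- measurability
      refine Eventually.of_forall (fun t => ?_)
      apply AEStronglyMeasurable.indicator _ measurableSet_Ioc
      apply Continuous.aestronglyMeasurable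
      fun_prop
    · -- bound
      filter_upwards [eventually_ge_atTop (1:ℝ)] with t ht
      refine Eventually.of_forall (fun u => ?_)
      by_cases hu : u ∈ Set.Ioc (0:ℝ) (π/2 * Real.sqrt t)
      · rw [hF]
        simp only [Set.indicator_of_mem hu]
        have hst : (0:ℝ) < Real.sqrt t := Real.sqrt_pos.mpr (by linarith)
        set x := u / Real.sqrt t with hx
        have hx0 : 0 < x := div_pos hu.1 hst
        have hxle : x ≤ π / 2 := by
          rw [hx, div_le_iff₀ hst]
          linarith [hu.2]
        have hsin : 2 / π * x ≤ Real.sin x := Real.mul_le_sin hx0.le hxle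
        have hsin0 : 0 ≤ 2 / π * x := by positivity
        have htx : t * x ^ 2 = u ^ 2 := by
          rw [hx, div_pow, Real.sq_sqrt (by linarith : (0:ℝ) ≤ t)]
          field_simp
        have hkey : 32 * γ / π ^ 2 * u ^ 2 ≤ 8 * γ * t * Real.sin x ^ 2 := by
          have h1 : (2 / π * x) ^ 2 ≤ Real.sin x ^ 2 := by
            apply sq_le_sq' (by linarith) hsin
          have h2 : t * (2 / π * x) ^ 2 ≤ t * Real.sin x ^ 2 :=
            mul_le_mul_of_nonneg_left h1 (by linarith)
          have h3 : t * (2 / π * x) ^ 2 = 4 / π ^ 2 * u ^ 2 := by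
            rw [mul_pow, ← mul_assoc, mul_comm t, mul_assoc, htx]
            ring
          have h4 : 4 / π ^ 2 * u ^ 2 ≤ t * Real.sin x ^ 2 := h3 ▸ h2
          calc 32 * γ / π ^ 2 * u ^ 2 = 8 * γ * (4 / π ^ 2 * u ^ 2) := by ring
            _ ≤ 8 * γ * (t * Real.sin x ^ 2) :=
                mul_le_mul_of_nonneg_left h4 (by positivity)
            _ = 8 * γ * t * Real.sin x ^ 2 := by ring
        have hnorm : ‖Real.exp (-8*γ*t*Real.sin x^2) * Real.cos x^2‖
            ≤ Real.exp (-8*γ*t*Real.sin x^2) := by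
          rw [Real.norm_eq_abs, abs_mul, abs_of_pos (Real.exp_pos _), abs_of_nonneg (sq_nonneg _)]
          nlinarith [Real.cos_sq_le_one x, sq_nonneg (Real.cos x), Real.exp_pos (-8*γ*t*Real.sin x^2)]
        refine hnorm.trans ?_
        apply Real.exp_le_exp.mpr
        nlinarith
      · rw [hF]
        simp only [Set.indicator_of_notMem hu, norm_zero]
        positivity
    · exact (integrable_exp_neg_mul_sq (by positivity)).restrict
    · -- pointwise limit
      refine (ae_restrict_mem measurableSet_Ioi).mono (fun u hu => ?_)
      have hu0 : (0:ℝ) < u := hu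
      have hx : Tendsto (fun t => u / Real.sqrt t) atTop (nhds 0) := by
        have := tendsto_sqrt_atTop'.inv_tendsto_atTop.const_mul u
        simpa [div_eq_mul_inv] using this
      have hx' : Tendsto (fun t => u / Real.sqrt t) atTop (nhdsWithin 0 {0}ᶜ) := by
        apply tendsto_nhdsWithin_of_tendsto_nhds_of_eventually_within _ hx
        filter_upwards [eventually_ge_atTop (1:ℝ)] with t ht
        have hst : (0:ℝ) < Real.sqrt t := Real.sqrt_pos.mpr (by linarith)
        simp [div_ne_zero hu0.ne' hst.ne']
      have hsin : Tendsto (fun t => Real.sqrt t * Real.sin (u / Real.sqrt t)) atTop (nhds u) := by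
        have h1 : Tendsto (fun t => u * (Real.sin (u / Real.sqrt t) / (u / Real.sqrt t)))
            atTop (nhds u) := by
          have := (tendsto_sin_div_nhdsWithin.comp hx').const_mul u
          simpa using this
        refine h1.congr' ?_
        filter_upwards [eventually_ge_atTop (1:ℝ)] with t ht
        have hst : (0:ℝ) < Real.sqrt t := Real.sqrt_pos.mpr (by linarith)
        field_simp
      have ht2 : Tendsto (fun t => t * Real.sin (u / Real.sqrt t)^2) atTop (nhds (u^2)) := by
        have := hsin.pow 2
        refine this.congr' ?_
        filter_upwards [eventually_ge_atTop (0:ℝ)] with t ht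
        rw [mul_pow, Real.sq_sqrt ht]
      have hcos : Tendsto (fun t => Real.cos (u / Real.sqrt t)^2) atTop (nhds 1) := by
        have := ((Real.continuous_cos.tendsto 0).comp hx).pow 2
        simpa using this
      have hexp : Tendsto (fun t => Real.exp (-8*γ*t*Real.sin (u / Real.sqrt t)^2))
          atTop (nhds (Real.exp (-(8*γ) * u^2))) := by
        have h2 : Tendsto (fun t => -(8*γ) * (t * Real.sin (u / Real.sqrt t)^2))
            atTop (nhds (-(8*γ) * u^2)) := ht2.const_mul _
        have := (Real.continuous_exp.tendsto _).comp h2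
        refine this.congr (fun t => ?_)
        simp only [Function.comp_apply]
        ring_nf
      have hlim : Tendsto (fun t => Real.exp (-8*γ*t*Real.sin (u / Real.sqrt t)^2)
          * Real.cos (u / Real.sqrt t)^2) atTop (nhds (Real.exp (-(8*γ) * u^2))) := by
        have := hexp.mul hcos
        simpa using this
      refine hlim.congr' ?_
      have hb : Tendsto (fun t : ℝ => π/2 * Real.sqrt t) atTop atTop :=
        tendsto_sqrt_atTop'.const_mul_atTop (by positivity)
      filter_upwards [hb.eventually_ge_atTop u] with t ht
      rw [hF]
      simp only [Set.indicator_of_mem (Set.mem_Ioc.mpr ⟨hu0, ht⟩)]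
  rw [integral_gaussian_Ioi] at hG
  refine hG.congr' ?_
  filter_upwards [eventually_ge_atTop (1:ℝ)] with t ht
  have hst : (0:ℝ) < Real.sqrt t := Real.sqrt_pos.mpr (by linarith)
  have hrw : (∫ u in Set.Ioi (0:ℝ), F t u)
      = ∫ u in Set.Ioc (0:ℝ) (π/2 * Real.sqrt t),
          Real.exp (-8*γ*t*Real.sin (u / Real.sqrt t)^2) * Real.cos (u / Real.sqrt t)^2 := by
    rw [hF, MeasureTheory.setIntegral_indicator measurableSet_Ioc,
      Set.inter_eq_right.mpr Set.Ioc_subset_Ioi_self]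
  rw [hrw, ← intervalIntegral.integral_of_le (by positivity)]
  rw [intervalIntegral.integral_comp_div (f := fun ω => Real.exp (-8*γ*t*Real.sin ω^2) * Real.cos ω^2) hst.ne']
  rw [zero_div, mul_div_assoc, div_self hst.ne', mul_one]
  simp [smul_eq_mul]


open Set MeasureTheory in
/-- With `g(ω,t) = (4/π) e^{−8γt sin²ω} cos²ω`, one has
`t^{−1/2} ∫₀^t ∫₀^{π/2} g(ω,s) dω ds → 2/√(2πγ)` as `t → ∞`:
the diffusivity diverges like `√t`. -/
theorem diffusivity_divergence (γ : ℝ) (hγ : 0 < γ) :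
    Tendsto (fun t : ℝ => (Real.sqrt t)⁻¹ *
        ∫ s in (0:ℝ)..t,
          ∫ ω in (0:ℝ)..(π / 2), (4 / π) * Real.exp (-8 * γ * s * Real.sin ω ^ 2) * Real.cos ω ^ 2)
      atTop (nhds (2 / Real.sqrt (2 * π * γ))) := by
  set f : ℝ → ℝ := fun s =>
    ∫ ω in (0:ℝ)..(π / 2), (4 / π) * Real.exp (-8 * γ * s * Real.sin ω ^ 2) * Real.cos ω ^ 2
    with hf_def
  have hcont : Continuous f := by
    apply intervalIntegral.continuous_parametric_intervalIntegral_of_continuous'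
    fun_prop
  have hfint : ∀ a b : ℝ, IntervalIntegrable f volume a b :=
    fun a b => hcont.intervalIntegrable a b
  have hfeq : ∀ s : ℝ, f s = (4 / π) *
      ∫ ω in (0:ℝ)..(π / 2), Real.exp (-8 * γ * s * Real.sin ω ^ 2) * Real.cos ω ^ 2 := by
    intro s
    rw [hf_def, ← intervalIntegral.integral_const_mul]
    simp only [mul_assoc]
  have hc : Tendsto (fun s => Real.sqrt s * f s) atTop
      (nhds ((4 / π) * (Real.sqrt (π / (8 * γ)) / 2))) := by
    have := (gauss_scaling γ hγ).const_mul (4 / π)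
    refine this.congr (fun s => ?_)
    rw [hfeq s]
    ring
  have hmain := cesaro_sqrt hfint hc
  have halg : 2 * ((4 / π) * (Real.sqrt (π / (8 * γ)) / 2)) = 2 / Real.sqrt (2 * π * γ) := by
    have hπ : (0:ℝ) < π := Real.pi_pos
    have h2πγ : (0:ℝ) < 2 * π * γ := by positivity
    have hs : (0:ℝ) < Real.sqrt (2 * π * γ) := Real.sqrt_pos.mpr h2πγ
    have h1 : π / (8 * γ) = (π / 2) ^ 2 / (2 * π * γ) := by
      field_simp
      ring
    rw [h1, Real.sqrt_div (by positivity) _, Real.sqrt_sq (by positivity)]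
    field_simp
    ring
  rw [← halg]
  exact hmain
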